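/- arXiv:math/9912242 — 6 statements merged into one kernel-verified Lean document; each statement's English description precedes it below -/
import Mathlib

section
/- For r ≥ 0, the average of log|r e^{iθ} − 1| over θ ∈ [0, 2π] equals 0 if r < 1 and equals log r if r ≥ 1; that is, (1/(2π)) ∫₀^{2π} log|r e^{iθ} − 1| dθ = max(log r, 0). -/
open Real MeasureTheory intervalIntegral Complex Metric Set

noncomputable def glog (r : ℝ) (θ : ℝ) : ℝ :=
  Real.log ‖(r : ℂ) * Complex.exp (θ * Complex.I) - 1‖

lemma cabs_eq (r θ : ℝ) :
    ‖(r : ℂ) * Complex.exp (θ * Complex.I) - 1‖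
      = Real.sqrt (r ^ 2 - 2 * r * Real.cos θ + 1) := by
  rw [Complex.norm_def]
  congr 1
  rw [Complex.exp_mul_I]
  have hc : Complex.cos θ = (Real.cos θ : ℂ) := (Complex.ofReal_cos θ).symm
  have hs : Complex.sin θ = (Real.sin θ : ℂ) := (Complex.ofReal_sin θ).symm
  rw [hc, hs]
  simp only [Complex.normSq_apply, Complex.sub_re, Complex.sub_im, Complex.add_re, Complex.add_im,
    Complex.mul_re, Complex.mul_im, Complex.ofReal_re, Complex.ofReal_im, Complex.one_re,
    Complex.one_im, Complex.I_re, Complex.I_im]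
  have := Real.sin_sq_add_cos_sq θ
  nlinarith [this]

-- log is interval integrable on [0, 2π]
lemma II_log : IntervalIntegrable Real.log volume 0 (2 * π) := by
  have hg : IntervalIntegrable (fun x : ℝ => 2 * x ^ (-(1:ℝ)/2) + x) volume 0 (2 * π) := by
    apply IntervalIntegrable.add
    · exact (intervalIntegral.intervalIntegrable_rpow' (by norm_num)).const_mul 2
    · exact intervalIntegrable_id
  apply hg.mono_fun' Real.measurable_log.aestronglyMeasurable
  rw [uIoc_of_le (by positivity)]
  filter_upwards [ae_restrict_mem measurableSet_Ioc] with x hx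
  obtain ⟨hx0, _⟩ := hx
  have hrpow : (0:ℝ) ≤ x ^ (-(1:ℝ)/2) := Real.rpow_nonneg hx0.le _
  simp only [Real.norm_eq_abs]
  rcases le_or_gt 1 x with h1 | h1
  · rw [_root_.abs_of_nonneg (Real.log_nonneg h1)]
    have := Real.log_le_sub_one_of_pos hx0
    nlinarith
  · rw [_root_.abs_of_nonpos (Real.log_nonpos hx0.le h1.le)]
    have h2 : Real.log (x ^ (-(1:ℝ)/2)) = (-(1:ℝ)/2) * Real.log x := Real.log_rpow hx0 _
    have h3 : Real.log (x ^ (-(1:ℝ)/2)) ≤ x ^ (-(1:ℝ)/2) :=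
      (Real.log_le_sub_one_of_pos (Real.rpow_pos_of_pos hx0 _)).trans (by linarith)
    nlinarith

lemma glog_one_eq (θ : ℝ) : glog 1 θ = Real.log (Real.sqrt (2 - 2 * Real.cos θ)) := by
  unfold glog
  rw [cabs_eq]
  norm_num
  ring_nf

lemma sqrt_low_aux {u v c : ℝ} (hu : 0 < u) (hv : 0 < v) (hv2 : v ≤ 2 * π)
    (hc2 : π ^ 2 * c ≤ π ^ 2 - 2 * u ^ 2) : (u * v / π ^ 2) ^ 2 ≤ 2 - 2 * c := by
  have hπ := Real.pi_pos
  rw [div_pow, div_le_iff₀ (by positivity)]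
  have hv4 : v ^ 2 ≤ 4 * π ^ 2 := by nlinarith
  have step1 : (u * v) ^ 2 ≤ 4 * π ^ 2 * u ^ 2 := by
    nlinarith [mul_le_mul_of_nonneg_left hv4 (sq_nonneg u)]
  have step2 : 4 * π ^ 2 * u ^ 2 ≤ (2 - 2 * c) * (π ^ 2) ^ 2 := by
    nlinarith [mul_le_mul_of_nonneg_left hc2 (by positivity : (0:ℝ) ≤ 2 * π ^ 2)]
  linarith

lemma glog_one_bound {θ : ℝ} (h0 : 0 < θ) (h2 : θ < 2 * π) :
    ‖glog 1 θ‖ ≤ Real.log 2 + 2 * Real.log π + ‖Real.log θ‖ + ‖Real.log (2 * π - θ)‖ := by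
  have hπ := Real.pi_pos
  have h2θ : (0:ℝ) < 2 * π - θ := by linarith
  rw [glog_one_eq]
  have hlow : θ * (2 * π - θ) / π ^ 2 ≤ Real.sqrt (2 - 2 * Real.cos θ) := by
    apply Real.le_sqrt_of_sq_le
    rcases le_or_gt θ π with hle | hlt
    · have hc : Real.cos θ ≤ 1 - 2 / π ^ 2 * θ ^ 2 :=
        Real.cos_le_one_sub_mul_cos_sq (by rw [_root_.abs_of_nonneg h0.le]; exact hle)
      have hc2 : π ^ 2 * Real.cos θ ≤ π ^ 2 - 2 * θ ^ 2 := by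
        have h' := mul_le_mul_of_nonneg_left hc (by positivity : (0:ℝ) ≤ π ^ 2)
        have he : π ^ 2 * (1 - 2 / π ^ 2 * θ ^ 2) = π ^ 2 - 2 * θ ^ 2 := by
          field_simp
        linarith
      exact sqrt_low_aux h0 h2θ (by linarith) hc2
    · have hc : Real.cos θ ≤ 1 - 2 / π ^ 2 * (2 * π - θ) ^ 2 := by
        have := Real.cos_le_one_sub_mul_cos_sq (x := 2 * π - θ)
          (by rw [_root_.abs_of_nonneg h2θ.le]; linarith)
        rwa [Real.cos_two_pi_sub] at this
      have hc2 : π ^ 2 * Real.cos θ ≤ π ^ 2 - 2 * (2 * π - θ) ^ 2 := by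
        have h' := mul_le_mul_of_nonneg_left hc (by positivity : (0:ℝ) ≤ π ^ 2)
        have he : π ^ 2 * (1 - 2 / π ^ 2 * (2 * π - θ) ^ 2) = π ^ 2 - 2 * (2 * π - θ) ^ 2 := by
          field_simp
        linarith
      have := sqrt_low_aux h2θ h0 (by linarith) hc2
      rwa [show (2 * π - θ) * θ = θ * (2 * π - θ) by ring] at this
  have hpos : 0 < θ * (2 * π - θ) / π ^ 2 := by positivity
  have hhi : Real.sqrt (2 - 2 * Real.cos θ) ≤ 2 := by
    have h4 : Real.sqrt (2 - 2 * Real.cos θ) ≤ Real.sqrt (2 ^ 2) :=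
      Real.sqrt_le_sqrt (by nlinarith [Real.neg_one_le_cos θ])
    rwa [Real.sqrt_sq (by norm_num : (0:ℝ) ≤ 2)] at h4
  have l1 : Real.log θ + Real.log (2 * π - θ) - 2 * Real.log π
      ≤ Real.log (Real.sqrt (2 - 2 * Real.cos θ)) := by
    calc Real.log θ + Real.log (2 * π - θ) - 2 * Real.log π
        = Real.log (θ * (2 * π - θ) / π ^ 2) := by
          rw [Real.log_div (by positivity) (pow_ne_zero 2 hπ.ne'),
            Real.log_mul h0.ne' h2θ.ne', Real.log_pow]
          push_cast; ring
      _ ≤ _ := Real.log_le_log hpos hlow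
  have l2 : Real.log (Real.sqrt (2 - 2 * Real.cos θ)) ≤ Real.log 2 :=
    Real.log_le_log (lt_of_lt_of_le hpos hlow) hhi
  have hπ1 : (0:ℝ) ≤ Real.log π := Real.log_nonneg (by nlinarith [Real.pi_gt_three])
  have h21 : (0:ℝ) ≤ Real.log 2 := Real.log_nonneg (by norm_num)
  simp only [Real.norm_eq_abs]
  rw [abs_le]
  constructor
  · linarith [neg_abs_le (Real.log θ), neg_abs_le (Real.log (2 * π - θ))]
  · linarith [abs_nonneg (Real.log θ), abs_nonneg (Real.log (2 * π - θ))]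

lemma glog_measurable (r : ℝ) : Measurable (glog r) := by
  apply Real.measurable_log.comp
  apply Continuous.measurable
  exact continuous_norm.comp (by continuity)

lemma II_glog_one : IntervalIntegrable (glog 1) volume 0 (2 * π) := by
  have hπ := Real.pi_pos
  have hDint : IntervalIntegrable (fun θ =>
      Real.log 2 + 2 * Real.log π + ‖Real.log θ‖ + ‖Real.log (2 * π - θ)‖) volume 0 (2 * π) := by
    apply IntervalIntegrable.add
    apply IntervalIntegrable.add
    · exact intervalIntegrable_const
    · exact II_log.norm
    · have := (II_log.norm.comp_sub_left (2 * π))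
      simpa using this.symm
  apply hDint.mono_fun' (glog_measurable 1).aestronglyMeasurable
  rw [uIoc_of_le (by positivity)]
  have hne : ∀ᵐ θ ∂volume.restrict (Ioc 0 (2*π)), θ ≠ 2 * π := by
    refine ae_restrict_of_ae ?_
    refine (MeasureTheory.measure_eq_zero_iff_ae_notMem (μ := volume) (s := {(2*π : ℝ)})).1
      (measure_singleton _) |>.mono ?_
    intro a ha h
    exact ha (by simp [h])
  filter_upwards [ae_restrict_mem measurableSet_Ioc, hne] with θ hθ hθne
  exact glog_one_bound hθ.1 (lt_of_le_of_ne hθ.2 hθne)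

lemma glog_periodic (r : ℝ) : Function.Periodic (glog r) (2 * π) := by
  intro θ
  unfold glog
  congr 3
  push_cast
  rw [add_mul, Complex.exp_add]
  simp [Complex.exp_two_pi_mul_I]

-- the bad set for the doubling identity is null
lemma bad_null : ∀ᵐ θ : ℝ, Complex.exp (θ * Complex.I) ≠ 1
    ∧ Complex.exp (θ * Complex.I) ≠ -1 := by
  have hS : {θ : ℝ | Complex.exp (θ * Complex.I) = 1 ∨ Complex.exp (θ * Complex.I) = -1}
      ⊆ Set.range (fun k : ℤ => (k : ℝ) * π) := by
    rintro θ (h | h)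
    · rw [Complex.exp_eq_one_iff] at h
      obtain ⟨n, hn⟩ := h
      have hC : (θ : ℂ) = (n : ℂ) * (2 * π) := by
        apply mul_right_cancel₀ Complex.I_ne_zero
        rw [hn]; ring
      have hR : θ = (n : ℝ) * (2 * π) := by exact_mod_cast hC
      exact ⟨2 * n, by push_cast; linarith⟩
    · have h2 : Complex.exp ((θ - π : ℝ) * Complex.I) = 1 := by
        push_cast
        rw [sub_mul, Complex.exp_sub, h]
        simp [Complex.exp_pi_mul_I]
      rw [Complex.exp_eq_one_iff] at h2
      obtain ⟨n, hn⟩ := h2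
      have hC : ((θ - π : ℝ) : ℂ) = (n : ℂ) * (2 * π) := by
        apply mul_right_cancel₀ Complex.I_ne_zero
        rw [hn]; ring
      have hR : θ - π = (n : ℝ) * (2 * π) := by exact_mod_cast hC
      exact ⟨2 * n + 1, by push_cast; linarith⟩
  have hnull : volume {θ : ℝ | Complex.exp (θ * Complex.I) = 1
      ∨ Complex.exp (θ * Complex.I) = -1} = 0 :=
    measure_mono_null hS ((Set.countable_range _).measure_zero _)
  have := (MeasureTheory.measure_eq_zero_iff_ae_notMem (μ := volume)).1 hnull
  filter_upwards [this] with θ hθ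
  exact ⟨fun h => hθ (Or.inl h), fun h => hθ (Or.inr h)⟩

lemma doubling : ∀ᵐ θ : ℝ, glog 1 (2 * θ) = glog 1 θ + glog 1 (θ + π) := by
  filter_upwards [bad_null] with θ hθ
  obtain ⟨h1, h2⟩ := hθ
  set E := Complex.exp (θ * Complex.I) with hE
  have hne1 : E - 1 ≠ 0 := sub_ne_zero.2 h1
  have hne2 : E + 1 ≠ 0 := fun h => h2 (by linear_combination h)
  have ha1 : ‖E - 1‖ ≠ 0 := by simp [sub_eq_zero, h1]
  have ha2 : ‖E + 1‖ ≠ 0 := by simpa [map_eq_zero] using hne2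
  have hfac : ((1:ℝ):ℂ) * Complex.exp (((2 * θ : ℝ)) * Complex.I) - 1 = (E - 1) * (E + 1) := by
    push_cast
    rw [show ((2:ℂ) * θ) * Complex.I = θ * Complex.I + θ * Complex.I by ring, Complex.exp_add]
    ring
  have hmid : ((1:ℝ):ℂ) * Complex.exp ((θ:ℂ) * Complex.I) - 1 = E - 1 := by
    rw [hE]; push_cast; ring
  have hshift : ((1:ℝ):ℂ) * Complex.exp (((θ + π : ℝ)) * Complex.I) - 1 = -(E + 1) := by
    push_cast
    rw [add_mul, Complex.exp_add, Complex.exp_pi_mul_I]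
    ring
  unfold glog
  rw [hfac, hmid, hshift, norm_mul, norm_neg, Real.log_mul ha1 ha2]

lemma int_one : ∫ θ in (0:ℝ)..(2 * π), glog 1 θ = 0 := by
  have hπ := Real.pi_pos
  have hII := II_glog_one
  have hper := glog_periodic 1
  have hII2 : IntervalIntegrable (glog 1) volume (2 * π) (4 * π) := by
    have h := hII.comp_sub_right (2 * π)
    have heq : (fun x => glog 1 (x - 2 * π)) = glog 1 := funext fun x => hper.sub_eq x
    rw [heq] at h
    ring_nf at h ⊢
    exact h
  have hII04 : IntervalIntegrable (glog 1) volume 0 (4 * π) := hII.trans hII2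
  have hval24 : ∫ θ in (2*π)..(4*π), glog 1 θ = ∫ θ in (0:ℝ)..(2*π), glog 1 θ := by
    have h := hper.intervalIntegral_add_eq (2 * π) 0
    rw [show (4:ℝ) * π = 2 * π + 2 * π by ring]
    simpa using h
  have hval04 : ∫ θ in (0:ℝ)..(4*π), glog 1 θ
      = (∫ θ in (0:ℝ)..(2*π), glog 1 θ) + ∫ θ in (0:ℝ)..(2*π), glog 1 θ := by
    rw [← intervalIntegral.integral_add_adjacent_intervals hII hII2, hval24]
  have hA : ∫ θ in (0:ℝ)..(2*π), glog 1 (2 * θ) = ∫ θ in (0:ℝ)..(2*π), glog 1 θ := by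
    rw [intervalIntegral.integral_comp_mul_left (glog 1) two_ne_zero, mul_zero,
      show (2:ℝ) * (2 * π) = 4 * π by ring, hval04, smul_eq_mul]
    ring
  have hII3 : IntervalIntegrable (glog 1) volume π (3 * π) := by
    apply hII04.mono_set'
    rw [uIoc_of_le (by linarith), uIoc_of_le (by linarith)]
    exact Ioc_subset_Ioc (by linarith) (by linarith)
  have hIIshift : IntervalIntegrable (fun θ => glog 1 (θ + π)) volume 0 (2 * π) := by
    have h := hII3.comp_add_right π
    rw [show π - π = 0 by ring, show 3 * π - π = 2 * π by ring] at h
    exact h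
  have hB : ∫ θ in (0:ℝ)..(2*π), glog 1 (θ + π) = ∫ θ in (0:ℝ)..(2*π), glog 1 θ := by
    rw [intervalIntegral.integral_comp_add_right (glog 1) π, zero_add]
    have h := hper.intervalIntegral_add_eq π 0
    rw [show (2:ℝ) * π + π = π + 2 * π by ring]
    simpa using h
  have hAB : ∫ θ in (0:ℝ)..(2*π), glog 1 (2 * θ)
      = (∫ θ in (0:ℝ)..(2*π), glog 1 θ) + ∫ θ in (0:ℝ)..(2*π), glog 1 θ := by
    have hcongr : ∫ θ in (0:ℝ)..(2*π), glog 1 (2 * θ)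
        = ∫ θ in (0:ℝ)..(2*π), (glog 1 θ + glog 1 (θ + π)) :=
      intervalIntegral.integral_congr_ae (doubling.mono fun θ h _ => h)
    rw [hcongr, intervalIntegral.integral_add hII hIIshift, hB]
  have := hA.symm.trans hAB
  linarith

lemma glog_ne {r : ℝ} (hr : r ≠ 1) (hr0 : 0 ≤ r) (θ : ℝ) :
    (r : ℂ) * Complex.exp (θ * Complex.I) - 1 ≠ 0 := by
  intro h
  have : ‖(r : ℂ) * Complex.exp (θ * Complex.I)‖ = 1 := by
    rw [sub_eq_zero] at h; rw [h]; simp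
  rw [norm_mul, Complex.norm_real, Real.norm_eq_abs, Complex.norm_exp] at this
  simp only [Complex.mul_I_re, Complex.ofReal_im, neg_zero, Real.exp_zero, mul_one,
    _root_.abs_of_nonneg hr0] at this
  exact hr this

lemma glog_cont {r : ℝ} (hr : r ≠ 1) (hr0 : 0 ≤ r) : Continuous (glog r) := by
  unfold glog
  have hc : Continuous fun θ : ℝ => (r : ℂ) * Complex.exp (θ * Complex.I) - 1 := by
    continuity
  apply (continuous_norm.comp hc).log
  intro θ
  simpa [sub_eq_zero] using glog_ne hr hr0 θ

lemma slit {r : ℝ} (h1 : r < 1) : ∀ z ∈ closedBall (0:ℂ) r, (1 - z) ∈ Complex.slitPlane := by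
  intro z hz
  rw [Complex.mem_slitPlane_iff]
  left
  rw [Complex.sub_re, Complex.one_re]
  have : z.re ≤ ‖z‖ := Complex.re_le_norm z
  have h2 : ‖z‖ ≤ r := by simpa [Complex.dist_eq] using hz
  linarith

lemma intA {r : ℝ} (h0 : 0 ≤ r) (h1 : r < 1) :
    ∫ θ in (0:ℝ)..(2 * π), glog r θ = 0 := by
  rcases eq_or_lt_of_le h0 with h0' | h0'
  · simp [glog, ← h0']
  set f : ℂ → ℂ := fun z => Complex.log (1 - z) with hf
  have hdiff' : ∀ z ∈ closedBall (0:ℂ) r, DifferentiableAt ℂ f z := by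
    intro z hz
    exact (Complex.differentiableAt_log (slit h1 z hz)).comp z (by fun_prop)
  have hcont : ContinuousOn f (closedBall (0:ℂ) r) := fun z hz =>
    (hdiff' z hz).continuousAt.continuousWithinAt
  have hdiff : ∀ z ∈ ball (0:ℂ) r \ (∅ : Set ℂ), DifferentiableAt ℂ f z := fun z hz =>
    hdiff' z (ball_subset_closedBall hz.1)
  have key := circleIntegral_sub_center_inv_smul_of_differentiable_on_off_countable h0'
    Set.countable_empty hcont hdiff
  have hf0 : f 0 = 0 := by simp [hf]
  rw [hf0, smul_zero] at key
  rw [circleIntegral] at key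
  simp only [deriv_circleMap, sub_zero, smul_eq_mul] at key
  have key2 : ∫ θ in (0:ℝ)..(2*π), Complex.I * f (circleMap 0 r θ) = 0 := by
    refine Eq.trans ?_ key
    apply intervalIntegral.integral_congr
    intro θ _
    have hne : circleMap 0 r θ ≠ 0 := circleMap_ne_center (c := 0) (ne_of_gt h0')
    simp only []
    rw [mul_comm (circleMap 0 r θ) Complex.I, mul_assoc, mul_inv_cancel_left₀ hne]
  rw [intervalIntegral.integral_const_mul, mul_eq_zero] at key2
  have key3 : ∫ θ in (0:ℝ)..(2*π), f (circleMap 0 r θ) = 0 :=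
    key2.resolve_left (by simp [Complex.I_ne_zero])
  have hint : IntervalIntegrable (fun θ => f (circleMap 0 r θ)) volume 0 (2*π) := by
    apply ContinuousOn.intervalIntegrable
    intro θ _
    exact ((hdiff' _ (circleMap_mem_closedBall 0 h0'.le θ)).continuousAt.comp
      (continuous_circleMap 0 r).continuousAt).continuousWithinAt
  have hre := Complex.reCLM.intervalIntegral_comp_comm hint
  rw [key3] at hre
  simp only [Complex.reCLM_apply, map_zero] at hre
  have final : ∫ θ in (0:ℝ)..(2*π), glog r θ
      = ∫ θ in (0:ℝ)..(2*π), (f (circleMap 0 r θ)).re := by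
    apply intervalIntegral.integral_congr
    intro θ _
    simp only [glog, hf, Complex.log_re]
    rw [circleMap_zero]
    congr 1
    rw [← norm_neg, neg_sub]
  rw [final, hre]

lemma intB {r : ℝ} (h1 : 1 < r) :
    ∫ θ in (0:ℝ)..(2 * π), glog r θ = 2 * π * Real.log r := by
  have hr0 : (0:ℝ) < r := by linarith
  set s := r⁻¹ with hs
  have hs0 : 0 < s := by positivity
  have hs1 : s < 1 := by
    rw [hs, inv_lt_one_iff₀]; right; exact h1
  have hpt : ∀ θ : ℝ, glog r θ = Real.log r + glog s θ := by
    intro θ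
    unfold glog
    rw [cabs_eq, cabs_eq]
    have hXpos : 0 < s ^ 2 - 2 * s * Real.cos θ + 1 := by
      nlinarith [Real.neg_one_le_cos θ, Real.cos_le_one θ]
    have hsqrt : Real.sqrt (r ^ 2 - 2 * r * Real.cos θ + 1)
        = r * Real.sqrt (s ^ 2 - 2 * s * Real.cos θ + 1) := by
      rw [show r ^ 2 - 2 * r * Real.cos θ + 1 = r ^ 2 * (s ^ 2 - 2 * s * Real.cos θ + 1) by
          rw [hs]; field_simp; ring,
        Real.sqrt_mul (sq_nonneg r), Real.sqrt_sq hr0.le]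
    rw [hsqrt, Real.log_mul hr0.ne' (Real.sqrt_ne_zero'.2 hXpos)]
  calc ∫ θ in (0:ℝ)..(2 * π), glog r θ
      = ∫ θ in (0:ℝ)..(2 * π), (Real.log r + glog s θ) :=
        intervalIntegral.integral_congr fun θ _ => hpt θ
    _ = (∫ _ in (0:ℝ)..(2 * π), Real.log r) + ∫ θ in (0:ℝ)..(2 * π), glog s θ := by
        apply intervalIntegral.integral_add intervalIntegrable_const
        exact ((glog_cont hs1.ne hs0.le).intervalIntegrable _ _)
    _ = 2 * π * Real.log r := by
        rw [intA hs0.le hs1, intervalIntegral.integral_const, add_zero, smul_eq_mul]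
        ring

theorem average_log_abs_circle (r : ℝ) (hr : 0 ≤ r) :
    (1 / (2 * π)) * ∫ θ in (0:ℝ)..(2 * π),
      Real.log ‖(r : ℂ) * Complex.exp (θ * Complex.I) - 1‖ =
    max (Real.log r) 0 := by
  have hπ := Real.pi_pos
  show (1 / (2 * π)) * ∫ θ in (0:ℝ)..(2 * π), glog r θ = max (Real.log r) 0
  rcases lt_trichotomy r 1 with h | h | h
  · rw [intA hr h, mul_zero, max_eq_right (Real.log_nonpos hr h.le)]
  · subst h
    rw [int_one, mul_zero]
    simp
  · rw [intB h, max_eq_left (Real.log_nonneg h.le)]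
    field_simp
end

section
/- Let μ be a probability measure on ℝ with compact support, λ ∈ ℂ, and ζ ∈ ℂ such that ζ − |λ − x|² ≠ 0 for all x in the support of μ and (Im λ)² − ζ ∉ [0,∞) (so x₊ ≠ x₋). Define x₊ = Re λ + i√((Im λ)² − ζ) and x₋ = Re λ − i√((Im λ)² − ζ) (for a fixed branch of the square root). Then ∫ 1/(ζ − |λ − x|²) dμ(x) = (G(x₊) − G(x₋))/(x₊ − x₋), where G is the Cauchy transform of μ. -/
open MeasureTheory

theorem cauchy_transform_of_abs_sq (μ : Measure ℝ) [IsProbabilityMeasure μ]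
    (K : Set ℝ) (hK : IsCompact K) (hμK : μ Kᶜ = 0)
    (lam ζ s : ℂ) (hs : s ^ 2 = ((lam.im : ℂ)) ^ 2 - ζ) (hs0 : s ≠ 0)
    (hden : ∀ x ∈ K, ζ - ((‖lam - (x : ℂ)‖)^2 : ℂ) ≠ 0)
    (G : ℂ → ℂ) (hG : ∀ w : ℂ, G w = ∫ x, (w - (x : ℂ))⁻¹ ∂μ)
    (xp xm : ℂ) (hxp : xp = (lam.re : ℂ) + Complex.I * s)
    (hxm : xm = (lam.re : ℂ) - Complex.I * s) :
    (∫ x, (ζ - ((‖lam - (x : ℂ)‖)^2 : ℂ))⁻¹ ∂μ)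
      = (G xp - G xm) / (xp - xm) := by
  have haemem : ∀ᵐ x ∂μ, x ∈ K := by
    rw [MeasureTheory.ae_iff]
    exact hμK
  have hres : μ.restrict K = μ := Measure.restrict_eq_self_of_ae_mem haemem
  -- abs squared identity
  have habs : ∀ x : ℝ, ((‖lam - (x : ℂ)‖)^2 : ℂ)
      = ((lam.re : ℂ) - (x : ℂ))^2 + (lam.im : ℂ)^2 := by
    intro x
    have h : (‖lam - (x : ℂ)‖)^2 = (lam.re - x)^2 + lam.im^2 := by
      rw [Complex.sq_norm, Complex.normSq_apply]
      simp [Complex.sub_re, Complex.sub_im]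
      ring
    exact_mod_cast h
  have hprod : ∀ x : ℝ, (xp - (x : ℂ)) * (xm - (x : ℂ))
      = ((‖lam - (x : ℂ)‖)^2 : ℂ) - ζ := by
    intro x
    rw [habs x, hxp, hxm]
    linear_combination hs - s^2 * Complex.I_sq
  have hnz : ∀ x ∈ K, xp - (x : ℂ) ≠ 0 ∧ xm - (x : ℂ) ≠ 0 := by
    intro x hx
    have h1 : (xp - (x : ℂ)) * (xm - (x : ℂ)) ≠ 0 := by
      rw [hprod x]
      intro h
      exact hden x hx (by linear_combination -h)
    exact ⟨left_ne_zero_of_mul h1, right_ne_zero_of_mul h1⟩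
  have hpm : xp - xm ≠ 0 := by
    rw [hxp, hxm]
    have : (lam.re : ℂ) + Complex.I * s - ((lam.re : ℂ) - Complex.I * s)
        = 2 * Complex.I * s := by ring
    rw [this]
    exact mul_ne_zero (mul_ne_zero two_ne_zero Complex.I_ne_zero) hs0
  -- pointwise identity
  have hpt : ∀ x ∈ K, (ζ - ((‖lam - (x : ℂ)‖)^2 : ℂ))⁻¹
      = ((xp - (x : ℂ))⁻¹ - (xm - (x : ℂ))⁻¹) * (xp - xm)⁻¹ := by
    intro x hx
    obtain ⟨h1, h2⟩ := hnz x hx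
    have hd := hden x hx
    field_simp
    linear_combination (xp - xm) * hprod x
  -- integrability
  have hint : ∀ w : ℂ, (∀ x ∈ K, w - (x : ℂ) ≠ 0) →
      Integrable (fun x : ℝ => (w - (x : ℂ))⁻¹) μ := by
    intro w hw
    rw [← hres]
    apply ContinuousOn.integrableOn_compact hK
    exact ((continuous_const.sub Complex.continuous_ofReal).continuousOn).inv₀ hw
  have hip : Integrable (fun x : ℝ => (xp - (x : ℂ))⁻¹) μ :=
    hint xp fun x hx => (hnz x hx).1
  have him : Integrable (fun x : ℝ => (xm - (x : ℂ))⁻¹) μ :=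
    hint xm fun x hx => (hnz x hx).2
  have hcong : (∫ x, (ζ - ((‖lam - (x : ℂ)‖)^2 : ℂ))⁻¹ ∂μ)
      = ∫ x, ((xp - (x : ℂ))⁻¹ - (xm - (x : ℂ))⁻¹) * (xp - xm)⁻¹ ∂μ := by
    apply integral_congr_ae
    filter_upwards [haemem] with x hx
    exact hpt x hx
  rw [hcong, integral_mul_const, integral_sub hip him, hG, hG, div_eq_mul_inv]
end

section
/- Let α > β > 0, γ = α − β, and λ = 1/ξ + γξ with 0 < |ξ| < 1/√γ and λ ∉ ℝ. With ω = 1/ξ − γξ, the inequality (ω − ω̄)/(λ − λ̄) ≥ α/β holds if and only if |ξ|² ≥ 1/(α + β). -/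
open scoped ComplexOrder

theorem elliptic_spectrum_reduction (α β γ : ℝ) (hβ : 0 < β) (hαβ : β < α)
    (hγ : γ = α - β) (ξ lam ω : ℂ)
    (hξ0 : 0 < ‖ξ‖) (hξ1 : ‖ξ‖ < 1 / Real.sqrt γ)
    (hlam : lam = ξ⁻¹ + (γ : ℂ) * ξ) (him : lam.im ≠ 0)
    (hω : ω = ξ⁻¹ - (γ : ℂ) * ξ) :
    ((α / β : ℝ) : ℂ) ≤ (ω - starRingEnd ℂ ω) / (lam - starRingEnd ℂ lam)
      ↔ 1 / (α + β) ≤ ‖ξ‖ ^ 2 := by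
  have hγ0 : 0 < γ := by rw [hγ]; linarith
  have hξne : ξ ≠ 0 := by
    intro h; rw [h] at hξ0; simp at hξ0
  set n : ℝ := Complex.normSq ξ with hn
  have hn0 : 0 < n := Complex.normSq_pos.mpr hξne
  have habs : ‖ξ‖ ^ 2 = n := Complex.sq_norm ξ
  have hγn : γ * n < 1 := by
    have h1 : ‖ξ‖ ^ 2 < (1 / Real.sqrt γ) ^ 2 := by
      apply pow_lt_pow_left₀ hξ1 (norm_nonneg ξ) (by norm_num)
    have h2 : (1 / Real.sqrt γ) ^ 2 = 1 / γ := by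
      rw [div_pow, one_pow, Real.sq_sqrt hγ0.le]
    rw [habs, h2] at h1
    rw [lt_div_iff₀ hγ0] at h1
    linarith
  have h1γn : 0 < 1 - γ * n := by linarith
  have hden : lam - starRingEnd ℂ lam ≠ 0 := by
    intro h
    have : (lam - starRingEnd ℂ lam).im = 0 := by rw [h]; simp
    simp [Complex.sub_im, Complex.conj_im] at this
    exact him (by linarith)
  have hmc : ξ * starRingEnd ℂ ξ = (n : ℂ) := Complex.mul_conj ξ
  have hcne : starRingEnd ℂ ξ ≠ 0 := by simpa using hξne
  have key : (ω - starRingEnd ℂ ω) * ((1 - γ * n : ℝ) : ℂ)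
      = ((γ * n + 1 : ℝ) : ℂ) * (lam - starRingEnd ℂ lam) := by
    subst hlam hω
    simp only [map_add, map_sub, map_mul, map_inv₀, Complex.conj_ofReal]
    push_cast
    field_simp
    linear_combination (2*(γ:ℂ)*(n:ℂ) + 2*(γ:ℂ)*(starRingEnd ℂ ξ) - 2*(γ:ℂ)*ξ + 1
      - ((γ:ℂ) + (γ:ℂ)^2)*(ξ*(starRingEnd ℂ ξ) + (n:ℂ))
      + (γ:ℂ)*(ξ*(starRingEnd ℂ ξ) - (n:ℂ)) - 1 + (γ:ℂ)^2*(ξ*(starRingEnd ℂ ξ) + (n:ℂ))) * hmc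
  have hratio : (ω - starRingEnd ℂ ω) / (lam - starRingEnd ℂ lam)
      = (((γ * n + 1) / (1 - γ * n) : ℝ) : ℂ) := by
    rw [div_eq_iff hden]
    push_cast
    rw [div_mul_eq_mul_div, eq_div_iff (by exact_mod_cast h1γn.ne')]
    push_cast at key ⊢
    linear_combination key
  rw [hratio, Complex.real_le_real, habs]
  rw [div_le_div_iff₀ hβ h1γn, div_le_iff₀ (by linarith : (0:ℝ) < α + β)]
  constructor <;> intro h <;> nlinarith [hγ0, hn0]
end

section
/- Let μ be the Bernoulli measure (δ_{μ₊} + δ_{μ₋})/2 on ℝ with μ₊, μ₋ > 0, μ₊ ≠ μ₋, and let ψ(z) = (1/2)(1/(1 − μ₊ z) + 1/(1 − μ₋ z)) − 1 be its moment generating series. For r > 0 with r² ∉ {μ₊, μ₋}, the number t = (2μ₊μ₋ − r²(μ₊ + μ₋))/(2(r² − μ₊)(r² − μ₋)) satisfies ψ((t−1)/(t r²)) = t − 1, provided t ≠ 0. -/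
theorem radial_distribution_bernoulli (μp μm : ℝ) (hp : 0 < μp) (hm : 0 < μm)
    (hne : μp ≠ μm)
    (ψ : ℝ → ℝ) (hψ : ∀ z, ψ z = (1/2) * (1/(1 - μp*z) + 1/(1 - μm*z)) - 1)
    (r : ℝ) (hr : 0 < r) (h1 : r^2 ≠ μp) (h2 : r^2 ≠ μm)
    (t : ℝ) (ht : t = (2*μp*μm - r^2*(μp + μm)) / (2*(r^2 - μp)*(r^2 - μm)))
    (ht0 : t ≠ 0) :
    ψ ((t - 1)/(t * r^2)) = t - 1 := by
  subst ht
  have hr2 : r^2 ≠ 0 := pow_ne_zero _ (ne_of_gt hr)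
  have hp1 : r^2 - μp ≠ 0 := sub_ne_zero.mpr h1
  have hm1 : r^2 - μm ≠ 0 := sub_ne_zero.mpr h2
  have hD : (2*(r^2 - μp)*(r^2 - μm)) ≠ 0 :=
    mul_ne_zero (mul_ne_zero two_ne_zero hp1) hm1
  have hN0 : (2*μp*μm - r^2*(μp + μm)) ≠ 0 := by
    intro h
    exact ht0 (by rw [h, zero_div])
  set t := (2*μp*μm - r^2*(μp + μm)) / (2*(r^2 - μp)*(r^2 - μm)) with ht
  have htr : t * r^2 ≠ 0 := mul_ne_zero ht0 hr2
  set z := (t - 1)/(t * r^2) with hz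
  have hpm : μm - μp ≠ 0 := sub_ne_zero.mpr (Ne.symm hne)
  have hmp : μp - μm ≠ 0 := sub_ne_zero.mpr hne
  have hpr : μp - r^2 ≠ 0 := sub_ne_zero.mpr (fun h => h1 h.symm)
  have hmr : μm - r^2 ≠ 0 := sub_ne_zero.mpr (fun h => h2 h.symm)
  have key1 : (1 - μp*z) * ((t*r^2) * (2*(r^2 - μp)*(r^2 - μm)))
      = r^2*(μm - μp)*(μp - r^2) := by
    rw [hz]
    rw [show (1 - μp*((t - 1)/(t * r^2))) * ((t*r^2) * (2*(r^2 - μp)*(r^2 - μm)))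
        = (t*r^2 - μp*(t-1)) * (2*(r^2 - μp)*(r^2 - μm)) by
      field_simp]
    rw [ht]
    field_simp
    ring
  have key2 : (1 - μm*z) * ((t*r^2) * (2*(r^2 - μp)*(r^2 - μm)))
      = r^2*(μp - μm)*(μm - r^2) := by
    rw [hz]
    rw [show (1 - μm*((t - 1)/(t * r^2))) * ((t*r^2) * (2*(r^2 - μp)*(r^2 - μm)))
        = (t*r^2 - μm*(t-1)) * (2*(r^2 - μp)*(r^2 - μm)) by
      field_simp]
    rw [ht]
    field_simp
    ring
  have hz1 : (1 - μp*z) ≠ 0 := by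
    intro h
    rw [h, zero_mul] at key1
    exact (mul_ne_zero (mul_ne_zero hr2 hpm) hpr) key1.symm
  have hz2 : (1 - μm*z) ≠ 0 := by
    intro h
    rw [h, zero_mul] at key2
    exact (mul_ne_zero (mul_ne_zero hr2 hmp) hmr) key2.symm
  have hA : r^2*(μm - μp)*(μp - r^2) ≠ 0 := mul_ne_zero (mul_ne_zero hr2 hpm) hpr
  have hB : r^2*(μp - μm)*(μm - r^2) ≠ 0 := mul_ne_zero (mul_ne_zero hr2 hmp) hmr
  have e1 : 1/(1 - μp*z) = (t*r^2*(2*(r^2 - μp)*(r^2 - μm))) / (r^2*(μm - μp)*(μp - r^2)) := by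
    rw [eq_div_iff hA, ← key1]
    field_simp
  have e2 : 1/(1 - μm*z) = (t*r^2*(2*(r^2 - μp)*(r^2 - μm))) / (r^2*(μp - μm)*(μm - r^2)) := by
    rw [eq_div_iff hB, ← key2]
    field_simp
  rw [hψ, e1, e2, ht]
  field_simp
  ring
end

section
/- For a ∈ ℂ with |a|² + 1 ≠ 0 on the relevant domain, the function p(λ) = −|β−α|²/(π(|λ−α|² − |λ−β|²)²) + (1/(2π))(1/(1−|λ−α|²)² + 1/(1−|λ−β|²)²), with α = 1, β = −1, is obtained as (1/(2π))∇² of L(λ) = (1/2) log|(|λ−1|² − |λ+1|²)/2| − (1/4)(log|1−|λ−1|²| + log|1−|λ+1|²|); i.e., ∇²L(λ) = 2π p(λ) at every point λ where |λ−1|² ≠ |λ+1|², |λ−1|² ≠ 1, and |λ+1|² ≠ 1. -/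
open Real Filter Topology

private noncomputable def Lc (s t : ℝ) : ℝ :=
  (1/2) * Real.log (-(2*s))
    - (1/4) * (Real.log (1 - ((s-1)^2+t^2)) + Real.log (1 - ((s+1)^2+t^2)))

private noncomputable def Fx (y s : ℝ) : ℝ :=
  1/(2*s) + (s-1)/(2*(1-((s-1)^2+y^2))) + (s+1)/(2*(1-((s+1)^2+y^2)))

private noncomputable def Fy (x t : ℝ) : ℝ :=
  t/(2*(1-((x-1)^2+t^2))) + t/(2*(1-((x+1)^2+t^2)))

private lemma ddx (y t : ℝ) (ht : t ≠ 0)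
    (ha : 1 - ((t-1)^2+y^2) ≠ 0) (hb : 1 - ((t+1)^2+y^2) ≠ 0) :
    HasDerivAt (fun s => Lc s y) (Fx y t) t := by
  have h1 : HasDerivAt (fun s : ℝ => -(2*s)) (-(2*1)) t :=
    ((hasDerivAt_id t).const_mul 2).neg
  have hl1 := h1.log (by simpa using ht)
  have h2 : HasDerivAt (fun s : ℝ => 1 - ((s-1)^2+y^2))
      (0 - (2:ℕ) * (t-1)^(2-1) * 1) t :=
    (hasDerivAt_const t 1).sub
      ((((hasDerivAt_id t).sub_const 1).pow 2).add_const (y^2))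
  have hl2 := h2.log ha
  have h3 : HasDerivAt (fun s : ℝ => 1 - ((s+1)^2+y^2))
      (0 - (2:ℕ) * (t+1)^(2-1) * 1) t :=
    (hasDerivAt_const t 1).sub
      ((((hasDerivAt_id t).add_const 1).pow 2).add_const (y^2))
  have hl3 := h3.log hb
  have h := (hl1.const_mul (1/2:ℝ)).sub ((hl2.add hl3).const_mul (1/4:ℝ))
  refine h.congr_deriv ?_
  unfold Fx
  field_simp
  ring

private lemma ddx2 (y t : ℝ) (ht : t ≠ 0)
    (ha : 1 - ((t-1)^2+y^2) ≠ 0) (hb : 1 - ((t+1)^2+y^2) ≠ 0) :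
    HasDerivAt (fun s => Fx y s)
      (-(1/(2*t^2))
        + (1 - ((t-1)^2+y^2) + 2*(t-1)^2)/(2*(1-((t-1)^2+y^2))^2)
        + (1 - ((t+1)^2+y^2) + 2*(t+1)^2)/(2*(1-((t+1)^2+y^2))^2)) t := by
  have d1 : HasDerivAt (fun s : ℝ => 2*s) (2*1) t := (hasDerivAt_id t).const_mul 2
  have h1 := (hasDerivAt_const t (1:ℝ)).div d1 (by simpa using ht)
  have dA : HasDerivAt (fun s : ℝ => 2*(1 - ((s-1)^2+y^2)))
      (2 * (0 - (2:ℕ) * (t-1)^(2-1) * 1)) t :=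
    ((hasDerivAt_const t 1).sub
      ((((hasDerivAt_id t).sub_const 1).pow 2).add_const (y^2))).const_mul 2
  have h2 := ((hasDerivAt_id t).sub_const 1).div dA (by
    simpa using mul_ne_zero (two_ne_zero) ha)
  have dB : HasDerivAt (fun s : ℝ => 2*(1 - ((s+1)^2+y^2)))
      (2 * (0 - (2:ℕ) * (t+1)^(2-1) * 1)) t :=
    ((hasDerivAt_const t 1).sub
      ((((hasDerivAt_id t).add_const 1).pow 2).add_const (y^2))).const_mul 2
  have h3 := ((hasDerivAt_id t).add_const 1).div dB (by
    simpa using mul_ne_zero (two_ne_zero) hb)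
  have h := (h1.add h2).add h3
  refine h.congr_deriv ?_
  simp only [id]
  field_simp
  ring

private lemma ddy (x t : ℝ)
    (ha : 1 - ((x-1)^2+t^2) ≠ 0) (hb : 1 - ((x+1)^2+t^2) ≠ 0) :
    HasDerivAt (fun s => Lc x s) (Fy x t) t := by
  have hl1 : HasDerivAt (fun _ : ℝ => (1/2) * Real.log (-(2*x))) 0 t :=
    hasDerivAt_const t _
  have h2 : HasDerivAt (fun s : ℝ => 1 - ((x-1)^2+s^2))
      (0 - (0 + (2:ℕ) * t^(2-1) * 1)) t :=
    (hasDerivAt_const t 1).sub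
      ((hasDerivAt_const t ((x-1)^2)).add ((hasDerivAt_id t).pow 2))
  have hl2 := h2.log ha
  have h3 : HasDerivAt (fun s : ℝ => 1 - ((x+1)^2+s^2))
      (0 - (0 + (2:ℕ) * t^(2-1) * 1)) t :=
    (hasDerivAt_const t 1).sub
      ((hasDerivAt_const t ((x+1)^2)).add ((hasDerivAt_id t).pow 2))
  have hl3 := h3.log hb
  have h := hl1.sub ((hl2.add hl3).const_mul (1/4:ℝ))
  refine h.congr_deriv ?_
  unfold Fy
  field_simp
  ring

private lemma ddy2 (x t : ℝ)
    (ha : 1 - ((x-1)^2+t^2) ≠ 0) (hb : 1 - ((x+1)^2+t^2) ≠ 0) :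
    HasDerivAt (fun s => Fy x s)
      ((1 - ((x-1)^2+t^2) + 2*t^2)/(2*(1-((x-1)^2+t^2))^2)
        + (1 - ((x+1)^2+t^2) + 2*t^2)/(2*(1-((x+1)^2+t^2))^2)) t := by
  have dA : HasDerivAt (fun s : ℝ => 2*(1 - ((x-1)^2+s^2)))
      (2 * (0 - (0 + (2:ℕ) * t^(2-1) * 1))) t :=
    ((hasDerivAt_const t 1).sub
      ((hasDerivAt_const t ((x-1)^2)).add ((hasDerivAt_id t).pow 2))).const_mul 2
  have h2 := (hasDerivAt_id t).div dA (by
    simpa using mul_ne_zero (two_ne_zero) ha)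
  have dB : HasDerivAt (fun s : ℝ => 2*(1 - ((x+1)^2+s^2)))
      (2 * (0 - (0 + (2:ℕ) * t^(2-1) * 1))) t :=
    ((hasDerivAt_const t 1).sub
      ((hasDerivAt_const t ((x+1)^2)).add ((hasDerivAt_id t).pow 2))).const_mul 2
  have h3 := (hasDerivAt_id t).div dB (by
    simpa using mul_ne_zero (two_ne_zero) hb)
  have h := h2.add h3
  refine h.congr_deriv ?_
  simp only [id]
  field_simp
  ring

theorem laplacian_logDelta_symmetry_plus_haar (x y : ℝ) (A B : ℝ → ℝ → ℝ)
    (hA : ∀ x y, A x y = (x - 1)^2 + y^2) (hB : ∀ x y, B x y = (x + 1)^2 + y^2)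
    (L : ℝ → ℝ → ℝ)
    (hL : ∀ x y, L x y = (1/2) * Real.log |(A x y - B x y)/2|
        - (1/4) * (Real.log |1 - A x y| + Real.log |1 - B x y|))
    (h1 : A x y ≠ B x y) (h2 : A x y ≠ 1) (h3 : B x y ≠ 1) :
    deriv (fun x' => deriv (fun x'' => L x'' y) x') x
      + deriv (fun y' => deriv (fun y'' => L x y'') y') y
      = 2 * Real.pi * (-4 / (Real.pi * (A x y - B x y)^2)
          + (1/(2*Real.pi)) * (1/(1 - A x y)^2 + 1/(1 - B x y)^2)) := by
  have hLc : L = Lc := by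
    funext s t
    rw [hL, hA, hB, Lc]
    rw [show ((((s:ℝ)-1)^2+t^2) - ((s+1)^2+t^2))/2 = -(2*s) by ring]
    rw [Real.log_abs, Real.log_abs, Real.log_abs]
  subst hLc
  simp only [hA, hB] at h1 h2 h3 ⊢
  have hx : x ≠ 0 := by
    intro h; apply h1; rw [h]; ring
  have ha : 1 - ((x-1)^2+y^2) ≠ 0 := by
    intro h; apply h2; linarith
  have hb : 1 - ((x+1)^2+y^2) ≠ 0 := by
    intro h; apply h3; linarith
  -- x direction
  have ex1 : ∀ᶠ s in 𝓝 x, s ≠ 0 := (continuousAt_id).eventually_ne hx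
  have ex2 : ∀ᶠ s in 𝓝 x, 1 - ((s-1)^2+y^2) ≠ 0 :=
    (Continuous.continuousAt (by fun_prop)).eventually_ne ha
  have ex3 : ∀ᶠ s in 𝓝 x, 1 - ((s+1)^2+y^2) ≠ 0 :=
    (Continuous.continuousAt (by fun_prop)).eventually_ne hb
  have hXev : (fun s => deriv (fun u => Lc u y) s) =ᶠ[𝓝 x] fun s => Fx y s := by
    filter_upwards [ex1, ex2, ex3] with s hs1 hs2 hs3
    exact (ddx y s hs1 hs2 hs3).deriv
  have hX : deriv (fun x' => deriv (fun x'' => Lc x'' y) x') x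
      = -(1/(2*x^2))
        + (1 - ((x-1)^2+y^2) + 2*(x-1)^2)/(2*(1-((x-1)^2+y^2))^2)
        + (1 - ((x+1)^2+y^2) + 2*(x+1)^2)/(2*(1-((x+1)^2+y^2))^2) := by
    rw [hXev.deriv_eq]
    exact (ddx2 y x hx ha hb).deriv
  -- y direction
  have ey2 : ∀ᶠ s in 𝓝 y, 1 - ((x-1)^2+s^2) ≠ 0 :=
    (Continuous.continuousAt (by fun_prop)).eventually_ne ha
  have ey3 : ∀ᶠ s in 𝓝 y, 1 - ((x+1)^2+s^2) ≠ 0 :=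
    (Continuous.continuousAt (by fun_prop)).eventually_ne hb
  have hYev : (fun s => deriv (fun u => Lc x u) s) =ᶠ[𝓝 y] fun s => Fy x s := by
    filter_upwards [ey2, ey3] with s hs2 hs3
    exact (ddy x s hs2 hs3).deriv
  have hY : deriv (fun y' => deriv (fun y'' => Lc x y'') y') y
      = (1 - ((x-1)^2+y^2) + 2*y^2)/(2*(1-((x-1)^2+y^2))^2)
        + (1 - ((x+1)^2+y^2) + 2*y^2)/(2*(1-((x+1)^2+y^2))^2) := by
    rw [hYev.deriv_eq]
    exact (ddy2 x y ha hb).deriv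
  rw [hX, hY]
  have hpi : Real.pi ≠ 0 := Real.pi_ne_zero
  have hd : ((x-1)^2+y^2) - ((x+1)^2+y^2) = -(4*x) := by ring
  rw [hd]
  field_simp
  ring
end

section
/- Let μ be a probability measure on ℝ, λ ∈ ℂ with Im λ ≠ 0, and v > 0. Set z₀ = Re λ + (i/v)√(v²(Im λ)² + v). Then ∫ 1/(1 + v|λ − t|²) dμ(t) = −Im G(z₀)/√(v²(Im λ)² + v), where G is the Cauchy transform of μ. -/
open MeasureTheory

theorem f_v_lambda_via_cauchy (μ : Measure ℝ) [IsProbabilityMeasure μ]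
    (lam : ℂ) (him : lam.im ≠ 0) (v : ℝ) (hv : 0 < v)
    (z₀ : ℂ) (hz : z₀ = (lam.re : ℂ)
      + (Complex.I / (v : ℂ)) * ((Real.sqrt (v^2 * lam.im^2 + v) : ℝ) : ℂ))
    (G : ℂ → ℂ) (hG : ∀ ζ : ℂ, G ζ = ∫ t, (ζ - (t : ℂ))⁻¹ ∂μ) :
    ∫ t, 1/(1 + v * ‖lam - (t : ℂ)‖^2) ∂μ
      = -(G z₀).im / Real.sqrt (v^2 * lam.im^2 + v) := by
  set s := Real.sqrt (v^2 * lam.im^2 + v) with hsdef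
  have harg : 0 < v^2 * lam.im^2 + v := by positivity
  have hs : 0 < s := Real.sqrt_pos.mpr harg
  have hs2 : s^2 = v^2 * lam.im^2 + v := Real.sq_sqrt harg.le
  have hvne : (v:ℝ) ≠ 0 := ne_of_gt hv
  -- real/imaginary parts of z₀
  have hre : z₀.re = lam.re := by simp [hz, Complex.div_im, Complex.div_re]
  have him0 : z₀.im = s / v := by
    simp [hz, Complex.div_im, Complex.div_re]
    field_simp
  -- integrability of the Cauchy kernel
  have hbound : ∀ t : ℝ, ‖(z₀ - (t:ℂ))⁻¹‖ ≤ v / s := by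
    intro t
    rw [norm_inv, show v / s = (s / v)⁻¹ by field_simp]
    apply inv_anti₀ (by positivity)
    calc s / v = |(z₀ - (t:ℂ)).im| := by
          rw [Complex.sub_im, him0]; simp [abs_of_pos (div_pos hs hv)]
      _ ≤ ‖z₀ - (t:ℂ)‖ := Complex.abs_im_le_norm _
  have hcont : Continuous fun t : ℝ => (z₀ - (t:ℂ))⁻¹ := by
    apply Continuous.inv₀ (by continuity)
    intro t
    intro h
    have : (z₀ - (t:ℂ)).im = 0 := by rw [h]; simp
    rw [Complex.sub_im, him0] at this
    simp only [Complex.ofReal_im, sub_zero] at this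
    exact (div_ne_zero hs.ne' hvne) this
  have hint : Integrable (fun t : ℝ => (z₀ - (t:ℂ))⁻¹) μ :=
    (integrable_const (v / s)).mono' hcont.aestronglyMeasurable
      (Filter.Eventually.of_forall hbound)
  have key : (∫ t, ((z₀ - (t:ℂ))⁻¹).im ∂μ) = (∫ t, (z₀ - (t:ℂ))⁻¹ ∂μ).im :=
    integral_im hint
  rw [hG, ← key]
  rw [eq_div_iff (ne_of_gt hs), ← integral_neg]
  rw [← integral_mul_const]
  apply integral_congr_ae
  apply Filter.Eventually.of_forall
  intro t
  have hns : Complex.normSq (z₀ - (t:ℂ)) = (lam.re - t)^2 + (s/v)^2 := by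
    rw [Complex.normSq_apply, Complex.sub_re, Complex.sub_im, hre, him0]
    simp [pow_two]
  have hnspos : (0:ℝ) < (lam.re - t)^2 + (s/v)^2 := by positivity
  have habs : ‖lam - (t:ℂ)‖^2 = (lam.re - t)^2 + lam.im^2 := by
    rw [← Complex.normSq_eq_norm_sq, Complex.normSq_apply]
    simp [pow_two]
  simp only [habs, Complex.inv_im, hns, Complex.sub_im, him0]
  simp only [Complex.ofReal_im, sub_zero]
  have h1 : (0:ℝ) < 1 + v * ((lam.re - t)^2 + lam.im^2) := by positivity
  field_simp
  linear_combination hs2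
end
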